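/- Let H be a d-dimensional Hilbert space with orthonormal basis {e_j}, and v = Σ_j α_j e_j ⊗ e_j with α_1 ≥ ... ≥ α_d ≥ 0 and Σ α_j² = 1. Then for any indices j with α_j = α_1, the vector α_1 e_j ⊗ e_j is a separable vector at minimal distance sqrt(1 − α_1²) from v; in particular the closest separable vector is not unique when α_1 = α_2. -/
import Mathlib


open scoped InnerProductSpace

/-- for v = Σ_j α_j e_j ⊗ e_j with α_1 ≥ ... ≥ α_d ≥ 0, Σ α_j² = 1,
every α_1 e_j ⊗ e_j with α_j = α_1 is a separable vector at the minimal distance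
√(1 − α_1²) from v; in particular when α_1 = α_2 the closest separable vector is
not unique.  W plays the role of H ⊗ H via the tensor map `t`. -/
theorem stmt_18 {H W : Type*} [NormedAddCommGroup H] [InnerProductSpace ℂ H]
    [NormedAddCommGroup W] [InnerProductSpace ℂ W]
    (d : ℕ) [NeZero d] (hd : 2 ≤ d)
    (t : H →ₗ[ℂ] H →ₗ[ℂ] W)
    (ht : ∀ a b c e : H, ⟪t a b, t c e⟫_ℂ = ⟪a, c⟫_ℂ * ⟪b, e⟫_ℂ)
    (e : OrthonormalBasis (Fin d) ℂ H)
    (α : Fin d → ℝ) (hmono : Antitone α) (hnonneg : ∀ j, 0 ≤ α j)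
    (hsum : ∑ j, α j ^ 2 = 1)
    (v : W) (hv : v = ∑ j, (α j : ℂ) • t (e j) (e j)) :
    (∀ j : Fin d, α j = α 0 →
      ‖v - (α 0 : ℂ) • t (e j) (e j)‖ = Real.sqrt (1 - α 0 ^ 2) ∧
      ∀ u₁ u₂ : H, Real.sqrt (1 - α 0 ^ 2) ≤ ‖v - t u₁ u₂‖) ∧
    (α 1 = α 0 → (α 0 : ℂ) • t (e 0) (e 0) ≠ (α 0 : ℂ) • t (e 1) (e 1)) := by
  have horth : ∀ i j : Fin d, ⟪e i, e j⟫_ℂ = if i = j then 1 else 0 :=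
    orthonormal_iff_ite.mp e.orthonormal
  have hvt : ∀ u₁ u₂ : H, ⟪v, t u₁ u₂⟫_ℂ = ∑ j, (α j : ℂ) * (⟪e j, u₁⟫_ℂ * ⟪e j, u₂⟫_ℂ) := by
    intro u₁ u₂
    rw [hv, sum_inner]
    refine Finset.sum_congr rfl fun j _ => ?_
    rw [inner_smul_left, Complex.conj_ofReal, ht]
  have hip : ∀ k j : Fin d, ⟪(α k : ℂ) • t (e k) (e k), (α j : ℂ) • t (e j) (e j)⟫_ℂ
      = if k = j then ((α j : ℂ))^2 else 0 := by
    intro k j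
    rw [inner_smul_left, inner_smul_right, Complex.conj_ofReal, ht, horth]
    by_cases h : k = j
    · subst h; simp [sq]
    · simp [h]
  have hvv : ⟪v, v⟫_ℂ = 1 := by
    rw [hv, inner_sum]
    have h1 : ∀ j : Fin d, ⟪∑ k, (α k : ℂ) • t (e k) (e k), (α j : ℂ) • t (e j) (e j)⟫_ℂ
        = (α j : ℂ)^2 := by
      intro j
      rw [sum_inner, Finset.sum_congr rfl fun k _ => hip k j, Finset.sum_ite_eq']
      simp
    rw [Finset.sum_congr rfl fun j _ => h1 j]
    norm_cast
  have hvej : ∀ j : Fin d, ⟪v, t (e j) (e j)⟫_ℂ = (α j : ℂ) := by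
    intro j
    simp [hvt, horth, Finset.sum_ite_eq']
  have hejv : ∀ j : Fin d, ⟪t (e j) (e j), v⟫_ℂ = (α j : ℂ) := by
    intro j
    rw [← inner_conj_symm, hvej, Complex.conj_ofReal]
  have hα0sq : α 0 ^ 2 ≤ 1 := by
    rw [← hsum]
    exact Finset.single_le_sum (f := fun j => α j ^ 2) (fun j _ => sq_nonneg _)
      (Finset.mem_univ 0)
  have h1α : 0 ≤ 1 - α 0 ^ 2 := by linarith
  -- Parseval
  have hpars : ∀ u : H, ∑ j, ‖⟪e j, u⟫_ℂ‖ ^ 2 = ‖u‖ ^ 2 := by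
    intro u
    have := e.sum_inner_mul_inner u u
    have h2 : ∀ j : Fin d, ⟪u, e j⟫_ℂ * ⟪e j, u⟫_ℂ = ((‖⟪e j, u⟫_ℂ‖ ^ 2 : ℝ) : ℂ) := by
      intro j
      rw [← inner_conj_symm]
      rw [Complex.conj_mul']
      norm_cast
    rw [Finset.sum_congr rfl fun j _ => h2 j] at this
    have h3 : RCLike.re (∑ j : Fin d, ((‖⟪e j, u⟫_ℂ‖ ^ 2 : ℝ) : ℂ)) = ‖u‖ ^ 2 := by
      rw [this, inner_self_eq_norm_sq]
    rw [map_sum] at h3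
    simpa [RCLike.re_to_complex, ← Complex.ofReal_pow, Complex.ofReal_re] using h3
  constructor
  · intro j hj
    constructor
    · -- exact distance
      have hww : ⟪v - (α 0 : ℂ) • t (e j) (e j), v - (α 0 : ℂ) • t (e j) (e j)⟫_ℂ
          = ((1 - α 0 ^ 2 : ℝ) : ℂ) := by
        rw [inner_sub_left, inner_sub_right, inner_sub_right, hvv,
          inner_smul_right, hvej, inner_smul_left, Complex.conj_ofReal, hejv,
          inner_smul_left, inner_smul_right, Complex.conj_ofReal, ht, horth, if_pos rfl]
        rw [hj]
        push_cast
        ring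
      rw [@norm_eq_sqrt_re_inner ℂ, hww]
      simp [RCLike.re_to_complex, ← Complex.ofReal_pow, Complex.ofReal_re]
    · -- minimality
      intro u₁ u₂
      set c := t u₁ u₂ with hc
      have hcc : ⟪c, c⟫_ℂ = ((‖u₁‖ ^ 2 * ‖u₂‖ ^ 2 : ℝ) : ℂ) := by
        rw [hc, ht, inner_self_eq_norm_sq_to_K, inner_self_eq_norm_sq_to_K]
        norm_cast
      -- bound on re ⟪v, c⟫
      have hre : Complex.re ⟪v, c⟫_ℂ ≤ α 0 * (‖u₁‖ * ‖u₂‖) := by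
        calc Complex.re ⟪v, c⟫_ℂ ≤ ‖⟪v, c⟫_ℂ‖ := Complex.re_le_norm _
        _ ≤ ∑ k, ‖(α k : ℂ) * (⟪e k, u₁⟫_ℂ * ⟪e k, u₂⟫_ℂ)‖ := by
            rw [hvt]; exact norm_sum_le _ _
        _ ≤ ∑ k, α 0 * (‖⟪e k, u₁⟫_ℂ‖ * ‖⟪e k, u₂⟫_ℂ‖) := by
            refine Finset.sum_le_sum fun k _ => ?_
            rw [norm_mul, norm_mul, Complex.norm_real, Real.norm_eq_abs,
              abs_of_nonneg (hnonneg k)]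
            exact mul_le_mul_of_nonneg_right (hmono (Fin.zero_le k))
              (mul_nonneg (norm_nonneg _) (norm_nonneg _))
        _ = α 0 * ∑ k, ‖⟪e k, u₁⟫_ℂ‖ * ‖⟪e k, u₂⟫_ℂ‖ := by rw [Finset.mul_sum]
        _ ≤ α 0 * (‖u₁‖ * ‖u₂‖) := by
            refine mul_le_mul_of_nonneg_left ?_ (hnonneg 0)
            calc ∑ k, ‖⟪e k, u₁⟫_ℂ‖ * ‖⟪e k, u₂⟫_ℂ‖
                ≤ Real.sqrt (∑ k, ‖⟪e k, u₁⟫_ℂ‖ ^ 2) * Real.sqrt (∑ k, ‖⟪e k, u₂⟫_ℂ‖ ^ 2) :=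
                  Real.sum_mul_le_sqrt_mul_sqrt _ _ _
              _ = ‖u₁‖ * ‖u₂‖ := by
                  rw [hpars, hpars, Real.sqrt_sq (norm_nonneg _), Real.sqrt_sq (norm_nonneg _)]
      -- squared norm of v - c
      have hsq : 1 - α 0 ^ 2 ≤ ‖v - c‖ ^ 2 := by
        have hexp : (‖v - c‖ : ℝ) ^ 2
            = 1 - 2 * Complex.re ⟪v, c⟫_ℂ + ‖u₁‖ ^ 2 * ‖u₂‖ ^ 2 := by
          rw [← inner_self_eq_norm_sq (𝕜 := ℂ)]
          rw [inner_sub_left, inner_sub_right, inner_sub_right, hvv, hcc]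
          have : ⟪c, v⟫_ℂ = (starRingEnd ℂ) ⟪v, c⟫_ℂ := (inner_conj_symm _ _).symm
          rw [this]
          simp only [RCLike.re_to_complex, Complex.sub_re, Complex.add_re, Complex.conj_re,
            Complex.one_re, Complex.ofReal_re]
          ring
        rw [hexp]
        nlinarith [sq_nonneg (‖u₁‖ * ‖u₂‖ - α 0), mul_pow ‖u₁‖ ‖u₂‖ 2,
          mul_nonneg (norm_nonneg u₁) (norm_nonneg u₂), hnonneg 0]
      calc Real.sqrt (1 - α 0 ^ 2) ≤ Real.sqrt (‖v - c‖ ^ 2) := Real.sqrt_le_sqrt hsq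
        _ = ‖v - c‖ := Real.sqrt_sq (norm_nonneg _)
  · intro _ heq
    have hpos : 0 < α 0 := by
      rcases lt_or_eq_of_le (hnonneg 0) with h | h
      · exact h
      · exfalso
        have hall : ∀ j, α j = 0 := fun j =>
          le_antisymm (by rw [h] at *; exact hmono (Fin.zero_le j)) (hnonneg j)
        simp [hall] at hsum
    have h01 : (0 : Fin d) ≠ 1 := by
      intro h
      have h2 := congrArg Fin.val h
      rw [Fin.val_zero, Fin.val_one' d] at h2
      rw [Nat.mod_eq_of_lt (by omega)] at h2
      omega
    have hkey := congrArg (fun w => ⟪t (e 0) (e 0), w⟫_ℂ) heq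
    have hL : ⟪t (e 0) (e 0), (α 0 : ℂ) • t (e 0) (e 0)⟫_ℂ = (α 0 : ℂ) := by
      rw [inner_smul_right, ht, horth, if_pos rfl]; ring
    have hR : ⟪t (e 0) (e 0), (α 0 : ℂ) • t (e 1) (e 1)⟫_ℂ = 0 := by
      rw [inner_smul_right, ht, horth, if_neg h01]; ring
    simp only [hL, hR] at hkey
    rw [Complex.ofReal_eq_zero] at hkey
    exact hpos.ne' hkey
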